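/- The GELU function has a unique global minimizer x* and x* ∈ (−√2, 0): the derivative GELU′(x) = Φ(x) + x·φ(x) has exactly one real zero x*, it lies in the open interval (−√2, 0), GELU is strictly decreasing on (−∞, x*] and strictly increasing on [x*, ∞). -/

import Mathlib

/-- The standard normal density `φ(x) = (1/√(2π))·exp(−x²/2)`. -/
noncomputable def stdGaussianPDF (x : ℝ) : ℝ :=
  (1 / Real.sqrt (2 * Real.pi)) * Real.exp (-x ^ 2 / 2)

/-- The standard normal cumulative distribution function `Φ(x) = ∫_{−∞}^{x} φ(t) dt`. -/
noncomputable def stdGaussianCDF (x : ℝ) : ℝ :=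
  ∫ t in Set.Iic x, stdGaussianPDF t

/-- The GELU activation function `GELU(x) = x·Φ(x)`. -/
noncomputable def gelu (x : ℝ) : ℝ := x * stdGaussianCDF x

open Set MeasureTheory Filter Real intervalIntegral

lemma pdf_pos (x : ℝ) : 0 < stdGaussianPDF x := by
  unfold stdGaussianPDF
  positivity

lemma pdf_cont : Continuous stdGaussianPDF := by
  unfold stdGaussianPDF
  continuity

lemma pdf_integrable : Integrable stdGaussianPDF := by
  have h : Integrable fun x : ℝ => Real.exp (-(1/2 : ℝ) * x ^ 2) :=
    integrable_exp_neg_mul_sq (by norm_num)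
  have := (h.const_mul (1 / Real.sqrt (2 * Real.pi)))
  refine this.congr ?_
  refine Filter.Eventually.of_forall fun x => ?_
  unfold stdGaussianPDF
  ring_nf

lemma cdf_sub (a b : ℝ) :
    stdGaussianCDF b - stdGaussianCDF a = ∫ x in a..b, stdGaussianPDF x :=
  intervalIntegral.integral_Iic_sub_Iic pdf_integrable.integrableOn pdf_integrable.integrableOn

lemma cdf_hasDeriv (x : ℝ) : HasDerivAt stdGaussianCDF (stdGaussianPDF x) x := by
  have key : ∀ u : ℝ, stdGaussianCDF u = stdGaussianCDF 0 + ∫ t in (0:ℝ)..u, stdGaussianPDF t := by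
    intro u
    have := cdf_sub 0 u
    linarith
  have h : HasDerivAt (fun u => ∫ t in (0:ℝ)..u, stdGaussianPDF t) (stdGaussianPDF x) x :=
    intervalIntegral.integral_hasDerivAt_right (pdf_integrable.intervalIntegrable)
      (pdf_cont.aestronglyMeasurable.stronglyMeasurableAtFilter) pdf_cont.continuousAt
  have := (h.const_add (stdGaussianCDF 0))
  refine this.congr_of_eventuallyEq ?_
  filter_upwards with u using (key u)

lemma cdf_cont : Continuous stdGaussianCDF :=
  continuous_iff_continuousAt.2 fun x => (cdf_hasDeriv x).continuousAt

lemma pdf_hasDeriv (x : ℝ) : HasDerivAt stdGaussianPDF (-x * stdGaussianPDF x) x := by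
  have inner : HasDerivAt (fun t : ℝ => -t ^ 2 / 2) (-x) x := by
    have := ((hasDerivAt_pow 2 x).neg).div_const 2
    refine HasDerivAt.congr_deriv this ?_
    simp; ring
  have hexp : HasDerivAt (fun t : ℝ => Real.exp (-t ^ 2 / 2))
      (Real.exp (-x ^ 2 / 2) * -x) x := inner.exp
  have h2 := hexp.const_mul (1 / Real.sqrt (2 * Real.pi))
  have h3 : HasDerivAt stdGaussianPDF
      (1 / Real.sqrt (2 * Real.pi) * (Real.exp (-x ^ 2 / 2) * -x)) x := h2
  refine HasDerivAt.congr_deriv h3 ?_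
  unfold stdGaussianPDF; ring

/-- g = GELU′ -/
noncomputable def g (x : ℝ) : ℝ := stdGaussianCDF x + x * stdGaussianPDF x

lemma g_hasDeriv (x : ℝ) : HasDerivAt g ((2 - x ^ 2) * stdGaussianPDF x) x := by
  have h := (cdf_hasDeriv x).add ((hasDerivAt_id x).mul (pdf_hasDeriv x))
  refine HasDerivAt.congr_deriv h ?_
  simp only [id_eq]; ring

lemma g_cont : Continuous g :=
  continuous_iff_continuousAt.2 fun x => (g_hasDeriv x).continuousAt

lemma tendsto_cdf_atBot : Tendsto stdGaussianCDF atBot (nhds 0) := by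
  have h : Tendsto (fun a : ℝ => ∫ t in a..(0:ℝ), stdGaussianPDF t) atBot
      (nhds (∫ t in Iic (0:ℝ), stdGaussianPDF t)) :=
    MeasureTheory.intervalIntegral_tendsto_integral_Iic 0 pdf_integrable.integrableOn tendsto_id
  have key : ∀ a : ℝ, stdGaussianCDF a
      = stdGaussianCDF 0 - ∫ t in a..(0:ℝ), stdGaussianPDF t := by
    intro a; have := cdf_sub a 0; linarith
  have h2 : Tendsto (fun a : ℝ => stdGaussianCDF 0 - ∫ t in a..(0:ℝ), stdGaussianPDF t) atBot
      (nhds (stdGaussianCDF 0 - ∫ t in Iic (0:ℝ), stdGaussianPDF t)) :=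
    (tendsto_const_nhds.sub h)
  have : stdGaussianCDF 0 - ∫ t in Iic (0:ℝ), stdGaussianPDF t = 0 := by
    simp [stdGaussianCDF]
  rw [this] at h2
  exact h2.congr fun a => (key a).symm

lemma tendsto_xpdf_atBot : Tendsto (fun x : ℝ => x * stdGaussianPDF x) atBot (nhds 0) := by
  have hb : Tendsto (fun x : ℝ => 2 * (1 / Real.sqrt (2 * Real.pi)) / |x|) atBot (nhds 0) := by
    have h : Tendsto (fun x : ℝ => |x|) atBot atTop := tendsto_abs_atBot_atTop
    simpa using (tendsto_const_nhds.div_atTop h :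
      Tendsto (fun x : ℝ => 2 * (1 / Real.sqrt (2 * Real.pi)) / |x|) atBot (nhds 0))
  refine squeeze_zero_norm' ?_ hb
  filter_upwards [Filter.eventually_le_atBot (-1 : ℝ)] with x hx
  have hxne : x ≠ 0 := by intro h; rw [h] at hx; norm_num at hx
  have hxpos : (0:ℝ) < |x| := abs_pos.2 hxne
  have hc : (0:ℝ) < 1 / Real.sqrt (2 * Real.pi) := by positivity
  have habs : ‖x * stdGaussianPDF x‖ = |x| * ((1 / Real.sqrt (2 * Real.pi)) *
      Real.exp (-x ^ 2 / 2)) := by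
    rw [Real.norm_eq_abs, abs_mul]
    unfold stdGaussianPDF
    rw [abs_mul, abs_of_pos hc, abs_of_pos (Real.exp_pos _)]
  rw [habs, le_div_iff₀ hxpos]
  have hE : x ^ 2 / 2 + 1 ≤ Real.exp (x ^ 2 / 2) := Real.add_one_le_exp _
  have hmul : Real.exp (-x ^ 2 / 2) * Real.exp (x ^ 2 / 2) = 1 := by
    rw [← Real.exp_add, show -x ^ 2 / 2 + x ^ 2 / 2 = (0:ℝ) by ring, Real.exp_zero]
  have hxx : |x| * |x| = x ^ 2 := by rw [← sq_abs]; ring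
  have hepos := Real.exp_pos (-x ^ 2 / 2)
  nlinarith [mul_le_mul_of_nonneg_left hE hepos.le, mul_pos hc hepos,
    mul_pos (mul_pos hc hepos) hxpos]

lemma g_anti : StrictAntiOn g (Iic (-Real.sqrt 2)) := by
  apply strictAntiOn_of_deriv_neg (convex_Iic _) g_cont.continuousOn
  intro x hx
  rw [interior_Iic] at hx
  rw [(g_hasDeriv x).deriv]
  have h2 : Real.sqrt 2 < -x := by
    have := hx.out; linarith
  have : 2 < x ^ 2 := by
    have h0 : (0:ℝ) ≤ Real.sqrt 2 := Real.sqrt_nonneg 2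
    nlinarith [Real.sq_sqrt (by norm_num : (2:ℝ) ≥ 0)]
  have := pdf_pos x
  nlinarith

lemma g_neg_far : ∀ x ≤ -Real.sqrt 2, g x < 0 := by
  intro x hx
  have hg0 : Tendsto g atBot (nhds 0) := by
    have h := tendsto_cdf_atBot.add tendsto_xpdf_atBot
    rw [add_zero] at h
    exact h
  have h1 : g (x - 1) ≤ 0 := by
    refine ge_of_tendsto hg0 ?_
    filter_upwards [Filter.eventually_le_atBot (x - 1)] with y hy
    rcases eq_or_lt_of_le hy with h | h
    · rw [h]
    · exact le_of_lt (g_anti (le_trans hy (by linarith)) (by linarith : x - 1 ≤ -Real.sqrt 2) h)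
  have h2 : g x < g (x - 1) :=
    g_anti (by linarith : x - 1 ≤ -Real.sqrt 2) hx (by linarith)
  linarith

lemma g_mono : StrictMonoOn g (Icc (-Real.sqrt 2) (Real.sqrt 2)) := by
  apply strictMonoOn_of_deriv_pos (convex_Icc _ _) g_cont.continuousOn
  intro x hx
  rw [interior_Icc] at hx
  rw [(g_hasDeriv x).deriv]
  have h2 : x ^ 2 < 2 := by
    have := abs_lt.2 ⟨hx.1, hx.2⟩
    have hs : |x| < Real.sqrt 2 := by rwa [abs_lt]
    nlinarith [abs_nonneg x, sq_abs x, Real.sq_sqrt (by norm_num : (2:ℝ) ≥ 0),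
      mul_self_lt_mul_self (abs_nonneg x) hs]
  have := pdf_pos x
  nlinarith

lemma cdf_nonneg (x : ℝ) : 0 ≤ stdGaussianCDF x :=
  MeasureTheory.setIntegral_nonneg measurableSet_Iic fun t _ => (pdf_pos t).le

lemma cdf_zero_pos : 0 < stdGaussianCDF 0 := by
  have h1 : 0 ≤ stdGaussianCDF (-1) := cdf_nonneg _
  have h2 : (0:ℝ) < ∫ t in (-1:ℝ)..(0:ℝ), stdGaussianPDF t :=
    intervalIntegral.intervalIntegral_pos_of_pos (pdf_integrable.intervalIntegrable)
      pdf_pos (by norm_num)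
  have := cdf_sub (-1) 0
  linarith

lemma cdf_mono (x : ℝ) (hx : 0 ≤ x) : stdGaussianCDF 0 ≤ stdGaussianCDF x := by
  have h := cdf_sub 0 x
  have h2 : (0:ℝ) ≤ ∫ t in (0:ℝ)..x, stdGaussianPDF t :=
    intervalIntegral.integral_nonneg hx fun t _ => (pdf_pos t).le
  linarith

lemma g_pos_nonneg (x : ℝ) (hx : 0 ≤ x) : 0 < g x := by
  have h1 := cdf_zero_pos
  have h2 := cdf_mono x hx
  have h3 : 0 ≤ x * stdGaussianPDF x := mul_nonneg hx (pdf_pos x).le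
  unfold g; linarith

theorem gelu_unique_global_minimizer :
    ∃ xs : ℝ,
      stdGaussianCDF xs + xs * stdGaussianPDF xs = 0 ∧
      (∀ y : ℝ, stdGaussianCDF y + y * stdGaussianPDF y = 0 → y = xs) ∧
      xs ∈ Set.Ioo (-Real.sqrt 2) 0 ∧
      StrictAntiOn gelu (Set.Iic xs) ∧
      StrictMonoOn gelu (Set.Ici xs) := by
  have hs2 : (0:ℝ) < Real.sqrt 2 := Real.sqrt_pos.2 (by norm_num)
  have hgneg : g (-Real.sqrt 2) < 0 := g_neg_far _ le_rfl
  have hgz : 0 < g 0 := g_pos_nonneg 0 le_rfl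
  -- IVT
  have hsub : Ioo (g (-Real.sqrt 2)) (g 0) ⊆ g '' Ioo (-Real.sqrt 2) 0 :=
    intermediate_value_Ioo (by linarith) g_cont.continuousOn
  obtain ⟨xs, hxs, hgxs⟩ := hsub ⟨hgneg, hgz⟩
  have hxs1 : -Real.sqrt 2 < xs := hxs.1
  have hxs2 : xs < 0 := hxs.2
  have hxsIcc : xs ∈ Icc (-Real.sqrt 2) (Real.sqrt 2) := ⟨hxs1.le, by linarith⟩
  -- sign facts
  have g_neg : ∀ x < xs, g x < 0 := by
    intro x hx
    rcases le_or_gt x (-Real.sqrt 2) with h | h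
    · exact g_neg_far x h
    · have := g_mono ⟨h.le, by linarith⟩ hxsIcc hx
      linarith [hgxs ▸ this]
  have g_pos : ∀ x, xs < x → 0 < g x := by
    intro x hx
    rcases le_or_gt 0 x with h | h
    · exact g_pos_nonneg x h
    · have := g_mono hxsIcc ⟨by linarith, by linarith⟩ hx
      linarith [hgxs ▸ this]
  -- gelu derivative
  have gelu_deriv : ∀ x : ℝ, HasDerivAt gelu (g x) x := by
    intro x
    have h := (hasDerivAt_id x).mul (cdf_hasDeriv x)
    refine HasDerivAt.congr_deriv h ?_
    unfold g; simp only [id_eq]; ring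
  have gelu_cont : Continuous gelu :=
    continuous_iff_continuousAt.2 fun x => (gelu_deriv x).continuousAt
  refine ⟨xs, hgxs, ?_, ⟨hxs1, hxs2⟩, ?_, ?_⟩
  · intro y hy
    by_contra hne
    rcases lt_or_gt_of_ne hne with h | h
    · have := g_neg y h; unfold g at this; linarith
    · have := g_pos y h; unfold g at this; linarith
  · apply strictAntiOn_of_deriv_neg (convex_Iic _) gelu_cont.continuousOn
    intro x hx
    rw [interior_Iic] at hx
    rw [(gelu_deriv x).deriv]
    exact g_neg x hx
  · apply strictMonoOn_of_deriv_pos (convex_Ici _) gelu_cont.continuousOn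
    intro x hx
    rw [interior_Ici] at hx
    rw [(gelu_deriv x).deriv]
    exact g_pos x hx
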